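/- For every real α with α ≠ -4, the degree-5 polynomial f(x,y) = x^2 + (16-α^2)x^3 + (α-2)x^2 y - (2/(α+4))x y^2 - (1/4)(4-α)(α+12)x^2 y^2 + ((8-α)/(α+4))x y^3 + (1/(α+4)^2)y^4 + ((α+12)/(α+4))x y^4 - (6/(α+4)^2)y^5 is an invariant algebraic curve of the system ẋ = 28x + 2(16-α^2)(α+12)x^2 + 6(3α-4)xy - (12/(α+4))y^2, ẏ = 2(16-α^2)x + 8y + (16-α^2)(α+12)xy + 2(5α-12)y^2, with cofactor k(x,y) = 56 + 6(16-α^2)(α+12)x + 4(13α-24)y; that is, p·∂f/∂x + q·∂f/∂y = k·f. -/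

import Mathlib

lemma deriv_quintic (a b c d e f : ℝ) (x : ℝ) :
    deriv (fun t : ℝ => a + b * t + c * t ^ 2 + d * t ^ 3 + e * t ^ 4 + f * t ^ 5) x =
      b + c * (2 * x) + d * (3 * x ^ 2) + e * (4 * x ^ 3) + f * (5 * x ^ 4) := by
  have h : HasDerivAt (fun t : ℝ => a + b * t + c * t ^ 2 + d * t ^ 3 + e * t ^ 4 + f * t ^ 5)
      (b + c * (2 * x) + d * (3 * x ^ 2) + e * (4 * x ^ 3) + f * (5 * x ^ 4)) x := by
    have := (((((hasDerivAt_const x a).add ((hasDerivAt_id x).const_mul b)).add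
      ((hasDerivAt_pow 2 x).const_mul c)).add ((hasDerivAt_pow 3 x).const_mul d)).add
      ((hasDerivAt_pow 4 x).const_mul e)).add ((hasDerivAt_pow 5 x).const_mul f)
    exact this.congr_deriv (by push_cast; ring)
  exact h.deriv

/-- The degree-5 curve of the CLS5 system is invariant with the given cofactor
`k(x,y) = 56 + 6(16-α²)(α+12)x + 4(13α-24)y`, for every real `α ≠ -4`. -/
theorem cls5_curve_invariant (α : ℝ) (hα : α ≠ -4) :
    ∀ x y : ℝ,
      (28 * x + 2 * (16 - α ^ 2) * (α + 12) * x ^ 2 + 6 * (3 * α - 4) * x * y -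
            (12 / (α + 4)) * y ^ 2) *
          deriv (fun t : ℝ =>
            t ^ 2 + (16 - α ^ 2) * t ^ 3 + (α - 2) * t ^ 2 * y - (2 / (α + 4)) * t * y ^ 2 -
              (1 / 4) * (4 - α) * (α + 12) * t ^ 2 * y ^ 2 + ((8 - α) / (α + 4)) * t * y ^ 3 +
              (1 / (α + 4) ^ 2) * y ^ 4 + ((α + 12) / (α + 4)) * t * y ^ 4 -
              (6 / (α + 4) ^ 2) * y ^ 5) x +
        (2 * (16 - α ^ 2) * x + 8 * y + (16 - α ^ 2) * (α + 12) * x * y +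
            2 * (5 * α - 12) * y ^ 2) *
          deriv (fun t : ℝ =>
            x ^ 2 + (16 - α ^ 2) * x ^ 3 + (α - 2) * x ^ 2 * t - (2 / (α + 4)) * x * t ^ 2 -
              (1 / 4) * (4 - α) * (α + 12) * x ^ 2 * t ^ 2 + ((8 - α) / (α + 4)) * x * t ^ 3 +
              (1 / (α + 4) ^ 2) * t ^ 4 + ((α + 12) / (α + 4)) * x * t ^ 4 -
              (6 / (α + 4) ^ 2) * t ^ 5) y =
      (56 + 6 * (16 - α ^ 2) * (α + 12) * x + 4 * (13 * α - 24) * y) *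
        (x ^ 2 + (16 - α ^ 2) * x ^ 3 + (α - 2) * x ^ 2 * y - (2 / (α + 4)) * x * y ^ 2 -
          (1 / 4) * (4 - α) * (α + 12) * x ^ 2 * y ^ 2 + ((8 - α) / (α + 4)) * x * y ^ 3 +
          (1 / (α + 4) ^ 2) * y ^ 4 + ((α + 12) / (α + 4)) * x * y ^ 4 -
          (6 / (α + 4) ^ 2) * y ^ 5) := by
  intro x y
  have h4 : α + 4 ≠ 0 := by intro h; apply hα; linarith
  have e1 : (fun t : ℝ =>
      t ^ 2 + (16 - α ^ 2) * t ^ 3 + (α - 2) * t ^ 2 * y - (2 / (α + 4)) * t * y ^ 2 -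
        (1 / 4) * (4 - α) * (α + 12) * t ^ 2 * y ^ 2 + ((8 - α) / (α + 4)) * t * y ^ 3 +
        (1 / (α + 4) ^ 2) * y ^ 4 + ((α + 12) / (α + 4)) * t * y ^ 4 -
        (6 / (α + 4) ^ 2) * y ^ 5) = (fun t : ℝ =>
      ((1 / (α + 4) ^ 2) * y ^ 4 - (6 / (α + 4) ^ 2) * y ^ 5) +
      (-(2 / (α + 4)) * y ^ 2 + ((8 - α) / (α + 4)) * y ^ 3 + ((α + 12) / (α + 4)) * y ^ 4) * t +
      (1 + (α - 2) * y - (1 / 4) * (4 - α) * (α + 12) * y ^ 2) * t ^ 2 +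
      (16 - α ^ 2) * t ^ 3 + (0 : ℝ) * t ^ 4 + (0 : ℝ) * t ^ 5) := by
    funext t; ring
  have e2 : (fun t : ℝ =>
      x ^ 2 + (16 - α ^ 2) * x ^ 3 + (α - 2) * x ^ 2 * t - (2 / (α + 4)) * x * t ^ 2 -
        (1 / 4) * (4 - α) * (α + 12) * x ^ 2 * t ^ 2 + ((8 - α) / (α + 4)) * x * t ^ 3 +
        (1 / (α + 4) ^ 2) * t ^ 4 + ((α + 12) / (α + 4)) * x * t ^ 4 -
        (6 / (α + 4) ^ 2) * t ^ 5) = (fun t : ℝ =>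
      (x ^ 2 + (16 - α ^ 2) * x ^ 3) + ((α - 2) * x ^ 2) * t +
      (-(2 / (α + 4)) * x - (1 / 4) * (4 - α) * (α + 12) * x ^ 2) * t ^ 2 +
      (((8 - α) / (α + 4)) * x) * t ^ 3 +
      ((1 / (α + 4) ^ 2) + ((α + 12) / (α + 4)) * x) * t ^ 4 +
      (-(6 / (α + 4) ^ 2)) * t ^ 5) := by
    funext t; ring
  rw [e1, e2, deriv_quintic, deriv_quintic]
  field_simp
  ring
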